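/- In the multicolored k-cycle lower bound graph with color classes A_1 (color 1), A_2 (color 2), B_1 (color 3), B_2 (color 4), paths of k-3 edges between a_{1,i} and b_{1,i} using each of the remaining colors 5,...,k exactly once, edges {a_{2,i}, b_{2,i}}, and encoding edges {a_{1,j},a_{2,ℓ}} iff x_0(j,ℓ)=1 and {b_{1,j},b_{2,ℓ}} iff x_1(j,ℓ)=1: there exists a cycle of length k using exactly one vertex of each of the k colors if and only if there exist (j,ℓ) with x_0(j,ℓ) = x_1(j,ℓ) = 1. -/
import Mathlib


/-- Vertices of the multicolored `k`-cycle lower bound graph, for `k = m + 4`: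
`inl (s, i)` is the `i`-th vertex of the color class `A₁, A₂, B₁, B₂`
(for `s = 0, 1, 2, 3`), and `inr (i, t)` for `t < m = k - 4` are the internal
vertices of the path of `k - 3` edges joining `a_{1,i}` to `b_{1,i}`. -/
abbrev MCVertex (N m : ℕ) := (Fin 4 × Fin N) ⊕ (Fin N × Fin m)

/-- Base relation of the multicolored `k`-cycle lower bound graph (`k = m + 4`):
paths of `k - 3` edges `a_{1,i} - q_{i,0} - ⋯ - q_{i,m-1} - b_{1,i}` (a direct edge
`a_{1,i} - b_{1,i}` when `m = 0`), edges `{a_{2,i}, b_{2,i}}`, and encoding edges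
`{a_{1,j}, a_{2,ℓ}}` iff `x₀ j ℓ` and `{b_{1,j}, b_{2,ℓ}}` iff `x₁ j ℓ`. -/
def mcRel {N : ℕ} (m : ℕ) (x0 x1 : Fin N → Fin N → Prop) :
    MCVertex N m → MCVertex N m → Prop := fun a b =>
  match a, b with
  | .inl (s, i), .inl (t, j) =>
      (s = 1 ∧ t = 3 ∧ i = j) ∨ (s = 0 ∧ t = 1 ∧ x0 i j) ∨
        (s = 2 ∧ t = 3 ∧ x1 i j) ∨ (m = 0 ∧ s = 0 ∧ t = 2 ∧ i = j)
  | .inl (s, i), .inr (j, t) =>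
      i = j ∧ ((s = 0 ∧ (t : ℕ) = 0) ∨ (s = 2 ∧ (t : ℕ) = m - 1))
  | .inr (i, t), .inr (j, u) => i = j ∧ (u : ℕ) = (t : ℕ) + 1
  | .inr _, .inl _ => False

/-- The `k`-coloring of the lower bound graph (`k = m + 4`): `A₁, A₂, B₁, B₂` get
colors `0, 1, 2, 3`, and the `t`-th internal path vertex gets color `4 + t`. -/
def mcColor {N m : ℕ} : MCVertex N m → Fin (m + 4) := fun a =>
  match a with
  | .inl (s, _) => ⟨s.val, by have := s.isLt; omega⟩
  | .inr (_, t) => ⟨4 + t.val, by have := t.isLt; omega⟩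

open Sum

section Helpers
variable {N m : ℕ} {x0 x1 : Fin N → Fin N → Prop}

lemma mc_adj_a2 (l : Fin N) (w : MCVertex N m)
    (h : (SimpleGraph.fromRel (mcRel m x0 x1)).Adj (.inl (1, l)) w) :
    w = .inl (3, l) ∨ ∃ j, w = .inl (0, j) ∧ x0 j l := by
  obtain ⟨t, j⟩ | ⟨j, t⟩ := w
  · simp [SimpleGraph.fromRel_adj, mcRel] at h
    rcases h.2 with ⟨rfl, rfl⟩ | ⟨rfl, hx⟩
    · exact Or.inl rfl
    · exact Or.inr ⟨j, rfl, hx⟩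
  · simp [SimpleGraph.fromRel_adj, mcRel] at h

lemma mc_adj_b2 (l : Fin N) (w : MCVertex N m)
    (h : (SimpleGraph.fromRel (mcRel m x0 x1)).Adj (.inl (3, l)) w) :
    w = .inl (1, l) ∨ ∃ j, w = .inl (2, j) ∧ x1 j l := by
  obtain ⟨t, j⟩ | ⟨j, t⟩ := w
  · simp [SimpleGraph.fromRel_adj, mcRel] at h
    rcases h.2 with ⟨rfl, rfl⟩ | ⟨rfl, hx⟩
    · exact Or.inl rfl
    · exact Or.inr ⟨j, rfl, hx⟩
  · simp [SimpleGraph.fromRel_adj, mcRel] at h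

lemma mc_adj_a1 (i : Fin N) (w : MCVertex N m)
    (h : (SimpleGraph.fromRel (mcRel m x0 x1)).Adj (.inl (0, i)) w) :
    (∃ j, w = .inl (1, j) ∧ x0 i j) ∨ (∃ ht : 0 < m, w = .inr (i, ⟨0, ht⟩)) ∨
      (m = 0 ∧ w = .inl (2, i)) := by
  obtain ⟨t, j⟩ | ⟨j, t⟩ := w
  · simp [SimpleGraph.fromRel_adj, mcRel] at h
    rcases h.2 with ⟨rfl, hx⟩ | ⟨hm, rfl, rfl⟩
    · exact Or.inl ⟨j, rfl, hx⟩
    · exact Or.inr (Or.inr ⟨hm, rfl⟩)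
  · simp [SimpleGraph.fromRel_adj, mcRel] at h
    obtain ⟨rfl, ht⟩ := h
    exact Or.inr (Or.inl ⟨t.pos, by simp [Fin.ext_iff, ht]⟩)

lemma mc_adj_b1 (i : Fin N) (w : MCVertex N m)
    (h : (SimpleGraph.fromRel (mcRel m x0 x1)).Adj (.inl (2, i)) w) :
    (∃ j, w = .inl (3, j) ∧ x1 i j) ∨ (∃ ht : m - 1 < m, w = .inr (i, ⟨m - 1, ht⟩)) ∨
      (m = 0 ∧ w = .inl (0, i)) := by
  obtain ⟨t, j⟩ | ⟨j, t⟩ := w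
  · simp [SimpleGraph.fromRel_adj, mcRel] at h
    rcases h.2 with ⟨rfl, hx⟩ | ⟨hm, rfl, rfl⟩
    · exact Or.inl ⟨j, rfl, hx⟩
    · exact Or.inr (Or.inr ⟨hm, rfl⟩)
  · simp [SimpleGraph.fromRel_adj, mcRel] at h
    obtain ⟨rfl, ht⟩ := h
    refine Or.inr (Or.inl ⟨by have := t.isLt; omega, ?_⟩)
    simp [Fin.ext_iff, ht]

lemma mc_adj_q (i : Fin N) (t : Fin m) (w : MCVertex N m)
    (h : (SimpleGraph.fromRel (mcRel m x0 x1)).Adj (.inr (i, t)) w) :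
    ((t : ℕ) = 0 ∧ w = .inl (0, i)) ∨ ((t : ℕ) = m - 1 ∧ w = .inl (2, i)) ∨
      (∃ u : Fin m, w = .inr (i, u) ∧ ((u : ℕ) = (t : ℕ) + 1 ∨ (t : ℕ) = (u : ℕ) + 1)) := by
  obtain ⟨s, j⟩ | ⟨j, u⟩ := w
  · simp [SimpleGraph.fromRel_adj, mcRel] at h
    obtain ⟨rfl, hs⟩ := h
    rcases hs with ⟨rfl, ht⟩ | ⟨rfl, ht⟩
    · exact Or.inl ⟨ht, rfl⟩
    · exact Or.inr (Or.inl ⟨ht, rfl⟩)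
  · simp [SimpleGraph.fromRel_adj, mcRel] at h
    rcases h.2 with ⟨rfl, hu⟩ | ⟨rfl, hu⟩
    · exact Or.inr (Or.inr ⟨u, rfl, Or.inl hu⟩)
    · exact Or.inr (Or.inr ⟨u, rfl, Or.inr hu⟩)

lemma mc_shape_inl {v : MCVertex N m} {c : Fin (m + 4)} (h : mcColor v = c) (hc : c.val < 4) :
    ∃ i, v = Sum.inl (⟨c.val, hc⟩, i) := by
  obtain ⟨s, i⟩ | ⟨i, t⟩ := v
  · refine ⟨i, ?_⟩
    have : s.val = c.val := congrArg Fin.val h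
    simp [Fin.ext_iff, this]
  · have : 4 + t.val = c.val := congrArg Fin.val h
    omega

lemma mc_shape_inr {v : MCVertex N m} {c : Fin (m + 4)} (h : mcColor v = c)
    {t : ℕ} (ht : t < m) (hc : c.val = 4 + t) : ∃ i, v = Sum.inr (i, ⟨t, ht⟩) := by
  obtain ⟨s, i⟩ | ⟨i, u⟩ := v
  · have : s.val = c.val := congrArg Fin.val h
    have := s.isLt; omega
  · refine ⟨i, ?_⟩
    have : 4 + u.val = c.val := congrArg Fin.val h
    simp [Fin.ext_iff]; omega

end Helpers

def mcCycle {N m : ℕ} (j l : Fin N) (p : ZMod (m + 4)) : MCVertex N m :=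
  if h : 3 < (@ZMod.val (m + 4) p) then
    .inr (j, ⟨m + 3 - ZMod.val p, by
      have := @ZMod.val_lt (m + 4) ⟨by omega⟩ p; omega⟩)
  else if ZMod.val p = 0 then .inl (0, j)
  else if ZMod.val p = 1 then .inl (1, l)
  else if ZMod.val p = 2 then .inl (3, l)
  else .inl (2, j)

theorem mc_backward (N m : ℕ) (x0 x1 : Fin N → Fin N → Prop)
    (j l : Fin N) (hx0 : x0 j l) (hx1 : x1 j l) :
    ∃ f : ZMod (m + 4) → MCVertex N m,
      Function.Injective f ∧
      (∀ p : ZMod (m + 4), (SimpleGraph.fromRel (mcRel m x0 x1)).Adj (f p) (f (p + 1))) ∧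
      Function.Bijective (mcColor ∘ f) := by
  haveI : NeZero (m + 4) := ⟨by omega⟩
  haveI : Fact (1 < m + 4) := ⟨by omega⟩
  have hval : ∀ p : ZMod (m + 4), ZMod.val p < m + 4 := fun p => ZMod.val_lt p
  have hadd : ∀ p : ZMod (m + 4), ZMod.val (p + 1) = (ZMod.val p + 1) % (m + 4) := by
    intro p; rw [ZMod.val_add, ZMod.val_one]
  have hcol : ∀ p : ZMod (m + 4), (mcColor (mcCycle j l p : MCVertex N m)).val =
      (if ZMod.val p = 0 then 0 else if ZMod.val p = 1 then 1 else
        if ZMod.val p = 2 then 3 else if ZMod.val p = 3 then 2 else m + 7 - ZMod.val p) := by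
    intro p
    by_cases h0 : ZMod.val p = 0
    · simp [mcCycle, mcColor, h0]
    · by_cases h1 : ZMod.val p = 1
      · simp [mcCycle, mcColor, h1]
      · by_cases h2 : ZMod.val p = 2
        · simp [mcCycle, mcColor, h2]; try rfl
        · by_cases h3 : ZMod.val p = 3
          · simp [mcCycle, mcColor, h3]; try rfl
          · have h4 : 3 < ZMod.val p := by omega
            have := hval p
            simp [mcCycle, mcColor, h4, h0, h1, h2, h3]
            omega
  have hinj : Function.Injective (mcColor ∘ (mcCycle j l : ZMod (m+4) → MCVertex N m)) := by
    intro p q h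
    have h' := congrArg Fin.val h
    simp only [Function.comp] at h'
    rw [hcol, hcol] at h'
    have hp := hval p; have hq := hval q
    have : ZMod.val p = ZMod.val q := by split_ifs at h' <;> omega
    exact ZMod.val_injective _ this
  refine ⟨mcCycle j l, fun p q h => hinj (by simp only [Function.comp]; rw [h]), ?_,
    (Fintype.bijective_iff_injective_and_card _).mpr ⟨hinj, by simp [ZMod.card]⟩⟩
  intro p
  have hp := hval p
  have hp1 := hadd p
  have hsix : ZMod.val p = 0 ∨ ZMod.val p = 1 ∨ ZMod.val p = 2 ∨
      (ZMod.val p = 3 ∧ m = 0) ∨ (ZMod.val p = 3 ∧ 0 < m) ∨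
      (3 < ZMod.val p ∧ ZMod.val p < m + 3) ∨ (ZMod.val p = m + 3 ∧ 0 < m) := by omega
  rcases hsix with h|h|h|⟨h,hm⟩|⟨h,hm⟩|⟨h,h2⟩|⟨h,hm⟩
  · rw [h] at hp1; rw [Nat.mod_eq_of_lt (by omega)] at hp1
    simp [mcCycle, h, hp1, SimpleGraph.fromRel_adj, mcRel, hx0]
  · rw [h] at hp1; rw [Nat.mod_eq_of_lt (by omega)] at hp1
    simp [mcCycle, h, hp1, SimpleGraph.fromRel_adj, mcRel]
  · rw [h] at hp1; rw [Nat.mod_eq_of_lt (by omega)] at hp1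
    simp [mcCycle, h, hp1, SimpleGraph.fromRel_adj, mcRel, hx1]
  · subst hm
    rw [h] at hp1
    have hp1' : ZMod.val (p + 1) = 0 := by omega
    simp [mcCycle, h, hp1', SimpleGraph.fromRel_adj, mcRel]
  · rw [h] at hp1; rw [Nat.mod_eq_of_lt (by omega)] at hp1
    have h4 : 3 < ZMod.val (p + 1) := by omega
    simp [mcCycle, h, hp1, h4, SimpleGraph.fromRel_adj, mcRel, Fin.ext_iff]
  · rw [Nat.mod_eq_of_lt (by omega)] at hp1
    have h5 : 3 < ZMod.val p + 1 := by omega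
    simp [mcCycle, h, hp1, h5, SimpleGraph.fromRel_adj, mcRel, Fin.ext_iff]
    omega
  · have hp1' : ZMod.val (p + 1) = 0 := by
      have e : m + 3 + 1 = m + 4 := by omega
      rw [hp1, h, e, Nat.mod_self]
    simp [mcCycle, h, hp1', hm, SimpleGraph.fromRel_adj, mcRel, Fin.ext_iff]

theorem mc_forward (N m : ℕ) (x0 x1 : Fin N → Fin N → Prop)
    (f : ZMod (m + 4) → MCVertex N m) (hfinj : Function.Injective f)
    (hadj : ∀ p : ZMod (m + 4),
      (SimpleGraph.fromRel (mcRel m x0 x1)).Adj (f p) (f (p + 1)))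
    (hbij : Function.Bijective (mcColor ∘ f)) :
    ∃ j l : Fin N, x0 j l ∧ x1 j l := by
  haveI : NeZero (m + 4) := ⟨by omega⟩
  have hcinj : ∀ {p q : ZMod (m + 4)}, mcColor (f p) = mcColor (f q) → p = q :=
    fun h => hbij.1 h
  have hsurj := hbij.2
  have hadj' : ∀ p : ZMod (m + 4),
      (SimpleGraph.fromRel (mcRel m x0 x1)).Adj (f p) (f (p - 1)) := by
    intro p
    have h := hadj (p - 1)
    rw [sub_add_cancel] at h
    exact h.symm
  have hne2 : ∀ p : ZMod (m + 4), f (p - 1) ≠ f (p + 1) := by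
    intro p h
    have h1 := hfinj h
    have h2 : ((2 : ℕ) : ZMod (m + 4)) = 0 := by
      push_cast
      linear_combination (-1 : ZMod (m + 4)) * h1
    have h3 := (ZMod.natCast_eq_zero_iff 2 (m + 4)).mp h2
    have := Nat.le_of_dvd (by norm_num) h3
    omega
  have uniqL : ∀ (s : Fin 4) (p p' : ZMod (m + 4)) (i i' : Fin N),
      f p = Sum.inl (s, i) → f p' = Sum.inl (s, i') → p = p' ∧ i = i' := by
    intro s p p' i i' h h'
    have hpp : p = p' := hcinj (by rw [h, h']; rfl)
    subst hpp
    have := h.symm.trans h'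
    simp at this
    exact ⟨rfl, this⟩
  have uniqR : ∀ (t : Fin m) (p p' : ZMod (m + 4)) (i i' : Fin N),
      f p = Sum.inr (i, t) → f p' = Sum.inr (i', t) → p = p' ∧ i = i' := by
    intro t p p' i i' h h'
    have hpp : p = p' := hcinj (by rw [h, h']; rfl)
    subst hpp
    have := h.symm.trans h'
    simp at this
    exact ⟨rfl, this⟩
  -- the four special vertices
  obtain ⟨p0, hp0⟩ := hsurj ⟨0, by omega⟩
  obtain ⟨i0, hv0⟩ := mc_shape_inl hp0 (by norm_num)
  have hv0' : f p0 = Sum.inl (0, i0) := hv0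
  obtain ⟨p1, hp1⟩ := hsurj ⟨1, by omega⟩
  obtain ⟨l1, hv1⟩ := mc_shape_inl hp1 (by norm_num)
  have hv1' : f p1 = Sum.inl (1, l1) := hv1
  obtain ⟨p2, hp2⟩ := hsurj ⟨2, by omega⟩
  obtain ⟨i2, hv2⟩ := mc_shape_inl hp2 (by norm_num)
  have hv2' : f p2 = Sum.inl (2, i2) := hv2
  obtain ⟨p3, hp3⟩ := hsurj ⟨3, by omega⟩
  obtain ⟨l3, hv3⟩ := mc_shape_inl hp3 (by norm_num)
  have hv3' : f p3 = Sum.inl (3, l3) := hv3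
  -- step 1 : neighbours of the A₂ vertex
  have key1 : (∃ p, f p = Sum.inl (3, l1)) ∧
      (∃ p jx, f p = Sum.inl (0, jx) ∧ x0 jx l1) := by
    have hA := hadj' p1
    have hB := hadj p1
    rw [hv1'] at hA hB
    rcases mc_adj_a2 _ _ hA with hA1 | ⟨jA, hA1, hxA⟩ <;>
      rcases mc_adj_a2 _ _ hB with hB1 | ⟨jB, hB1, hxB⟩
    · exact absurd (hA1.trans hB1.symm) (hne2 p1)
    · exact ⟨⟨p1 - 1, hA1⟩, p1 + 1, jB, hB1, hxB⟩
    · exact ⟨⟨p1 + 1, hB1⟩, p1 - 1, jA, hA1, hxA⟩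
    · exact absurd (congrArg f (uniqL 0 _ _ _ _ hA1 hB1).1) (hne2 p1)
  -- step 2 : the B₂ vertex has the same index
  obtain ⟨pb, hpb⟩ := key1.1
  obtain ⟨-, hl⟩ := uniqL 3 _ _ _ _ hpb hv3'
  subst hl
  -- step 3 : neighbours of the B₂ vertex give x1 _ l1
  have hx1' : x1 i2 l1 := by
    have hA := hadj' p3
    have hB := hadj p3
    rw [hv3'] at hA hB
    rcases mc_adj_b2 _ _ hA with hA1 | ⟨jA, hA1, hxA⟩ <;>
      rcases mc_adj_b2 _ _ hB with hB1 | ⟨jB, hB1, hxB⟩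
    · exact absurd (hA1.trans hB1.symm) (hne2 p3)
    · exact (uniqL 2 _ _ _ _ hB1 hv2').2 ▸ hxB
    · exact (uniqL 2 _ _ _ _ hA1 hv2').2 ▸ hxA
    · exact absurd (congrArg f (uniqL 2 _ _ _ _ hA1 hB1).1) (hne2 p3)
  -- step 4 : x0 i0 l1
  have hx0' : x0 i0 l1 := by
    obtain ⟨pa, ja, hpa, hxa⟩ := key1.2
    exact (uniqL 0 _ _ _ _ hpa hv0').2 ▸ hxa
  -- step 5 : i2 = i0
  have hii : i2 = i0 := by
    rcases Nat.eq_zero_or_pos m with hm | hm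
    · -- m = 0 : direct edge a₁ - b₁
      have hA := hadj' p0
      have hB := hadj p0
      rw [hv0'] at hA hB
      rcases mc_adj_a1 _ _ hA with ⟨jA, hA1, hxA⟩ | ⟨htA, hA1⟩ | ⟨-, hA1⟩ <;>
        rcases mc_adj_a1 _ _ hB with ⟨jB, hB1, hxB⟩ | ⟨htB, hB1⟩ | ⟨-, hB1⟩
      · exact absurd (congrArg f (uniqL 1 _ _ _ _ hA1 hB1).1) (hne2 p0)
      · omega
      · exact (uniqL 2 _ _ _ _ hv2' hB1).2
      · omega
      · omega
      · omega
      · exact (uniqL 2 _ _ _ _ hv2' hA1).2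
      · omega
      · exact absurd (hA1.trans hB1.symm) (hne2 p0)
    · -- m > 0 : walk along the path
      have chain : ∀ t (ht : t < m) (i : Fin N) (p : ZMod (m + 4)),
          f p = Sum.inr (i, ⟨t, ht⟩) → i = i0 := by
        intro t
        induction t with
        | zero =>
          intro ht i p hfp
          have side : ∀ w, (SimpleGraph.fromRel (mcRel m x0 x1)).Adj
              (Sum.inr (i, (⟨0, ht⟩ : Fin m))) w →
              w = Sum.inl (0, i) ∨ (m = 1 ∧ w = Sum.inl (2, i)) ∨
                ∃ hu : 1 < m, w = Sum.inr (i, ⟨1, hu⟩) := by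
            intro w hw
            rcases mc_adj_q _ _ _ hw with ⟨-, h1⟩ | ⟨h0, h1⟩ | ⟨u, h1, hu⟩
            · exact Or.inl h1
            · simp only [Fin.val_mk] at h0
              exact Or.inr (Or.inl ⟨by omega, h1⟩)
            · simp only [Fin.val_mk] at hu
              rcases hu with hu | hu
              · refine Or.inr (Or.inr ⟨by have := u.isLt; omega, ?_⟩)
                rw [h1]
                congr 1
                exact congrArg _ (Fin.ext (by simpa using hu))
              · omega
          have hA := hadj' p
          have hB := hadj p
          rw [hfp] at hA hB
          rcases side _ hA with hA1 | ⟨hmA, hA1⟩ | ⟨huA, hA1⟩ <;>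
            rcases side _ hB with hB1 | ⟨hmB, hB1⟩ | ⟨huB, hB1⟩
          · exact (uniqL 0 _ _ _ _ hA1 hv0').2
          · exact (uniqL 0 _ _ _ _ hA1 hv0').2
          · exact (uniqL 0 _ _ _ _ hA1 hv0').2
          · exact (uniqL 0 _ _ _ _ hB1 hv0').2
          · exact absurd (hA1.trans hB1.symm) (hne2 p)
          · omega
          · exact (uniqL 0 _ _ _ _ hB1 hv0').2
          · omega
          · exact absurd (hA1.trans hB1.symm) (hne2 p)
        | succ t ih =>
          intro ht i p hfp
          have ht' : t < m := by omega
          have side : ∀ w, (SimpleGraph.fromRel (mcRel m x0 x1)).Adj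
              (Sum.inr (i, (⟨t + 1, ht⟩ : Fin m))) w →
              w = Sum.inr (i, ⟨t, ht'⟩) ∨ (t + 1 = m - 1 ∧ w = Sum.inl (2, i)) ∨
                ∃ hu : t + 2 < m, w = Sum.inr (i, ⟨t + 2, hu⟩) := by
            intro w hw
            rcases mc_adj_q _ _ _ hw with ⟨h0, -⟩ | ⟨h0, h1⟩ | ⟨u, h1, hu⟩
            · simp only [Fin.val_mk] at h0; omega
            · simp only [Fin.val_mk] at h0
              exact Or.inr (Or.inl ⟨h0, h1⟩)
            · simp only [Fin.val_mk] at hu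
              rcases hu with hu | hu
              · refine Or.inr (Or.inr ⟨by have := u.isLt; omega, ?_⟩)
                rw [h1]
                congr 1
                exact congrArg _ (Fin.ext (by simpa using hu))
              · refine Or.inl ?_
                rw [h1]
                congr 1
                exact congrArg _ (Fin.ext (by simp; omega))
          have hA := hadj' p
          have hB := hadj p
          rw [hfp] at hA hB
          rcases side _ hA with hA1 | ⟨hmA, hA1⟩ | ⟨huA, hA1⟩ <;>
            rcases side _ hB with hB1 | ⟨hmB, hB1⟩ | ⟨huB, hB1⟩
          · exact ih ht' i _ hA1
          · exact ih ht' i _ hA1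
          · exact ih ht' i _ hA1
          · exact ih ht' i _ hB1
          · exact absurd (hA1.trans hB1.symm) (hne2 p)
          · omega
          · exact ih ht' i _ hB1
          · omega
          · exact absurd (hA1.trans hB1.symm) (hne2 p)
      -- neighbours of the B₁ vertex
      have hA := hadj' p2
      have hB := hadj p2
      rw [hv2'] at hA hB
      rcases mc_adj_b1 _ _ hA with ⟨jA, hA1, hxA⟩ | ⟨htA, hA1⟩ | ⟨hm0, -⟩ <;>
        rcases mc_adj_b1 _ _ hB with ⟨jB, hB1, hxB⟩ | ⟨htB, hB1⟩ | ⟨hm0', -⟩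
      · exact absurd (congrArg f (uniqL 3 _ _ _ _ hA1 hB1).1) (hne2 p2)
      · exact chain (m - 1) htB i2 _ hB1
      · omega
      · exact chain (m - 1) htA i2 _ hA1
      · exact absurd (hA1.trans hB1.symm) (hne2 p2)
      · omega
      · omega
      · omega
      · omega
  exact ⟨i0, l1, hx0', hii ▸ hx1'⟩

/-- The multicolored lower bound graph contains a cycle of length `k = m + 4` using
exactly one vertex of each of the `k` colors if and only if there is a pair `(j, ℓ)`
with `x₀ j ℓ = x₁ j ℓ = 1`. -/
theorem multicolored_cycle_iff (N m : ℕ) (hN : 1 ≤ N)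
    (x0 x1 : Fin N → Fin N → Prop) :
    (∃ f : ZMod (m + 4) → MCVertex N m,
      Function.Injective f ∧
      (∀ p : ZMod (m + 4), (SimpleGraph.fromRel (mcRel m x0 x1)).Adj (f p) (f (p + 1))) ∧
      Function.Bijective (mcColor ∘ f)) ↔
    ∃ j l : Fin N, x0 j l ∧ x1 j l := by
  constructor
  · rintro ⟨f, h1, h2, h3⟩
    exact mc_forward N m x0 x1 f h1 h2 h3
  · rintro ⟨j, l, h0, h1⟩
    exact mc_backward N m x0 x1 j l h0 h1
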